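/- Let Ξ be the automorphism of sl(n+2,C) induced by the Dynkin diagram automorphism α_i ↦ α_{n+2−i} on simple roots (extended by Ξ(H_{α_i}) = H_{Ξ(α_i)}, Ξ(E_{α_i}) = E_{Ξ(α_i)}, Ξ(F_{α_i}) = F_{Ξ(α_i)}). Then the composite embedding Ξ∘Θ of sl(n+1) ⋉ C^{n+1} into sl(n+2) is equivalent (conjugate by an inner automorphism) to the embedding Φ. -/

import Mathlib

namespace Paper

attribute [local instance 100] LieRing.ofAssociativeRing

/-- A concrete model of the perfect Lie algebra `sl(n+1) ⋉ ℂ^{n+1}`: the Lie subalgebra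
of `gl(n+2, ℂ)` of trace-zero matrices whose first row vanishes.  Its generators are
`H_i = A_{i+1,i+1} - A_{i+2,i+2}`, `E_{p,q} = A_{p+1,q+2}`, `F_{p,q} = A_{q+2,p+1}`
(`1 ≤ i ≤ n`, `1 ≤ p ≤ q ≤ n`) and `P_j = A_{j+1,1}` (`1 ≤ j ≤ n+1`). -/
def gCar (n : ℕ) : LieSubalgebra ℂ (Matrix (Fin (n + 2)) (Fin (n + 2)) ℂ) where
  carrier := {X | (∀ j, X 0 j = 0) ∧ Matrix.trace X = 0}
  add_mem' := by
    rintro X Y ⟨hX, hX'⟩ ⟨hY, hY'⟩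
    refine ⟨fun j => ?_, ?_⟩
    · simp [Matrix.add_apply, hX j, hY j]
    · simp [Matrix.trace_add, hX', hY']
  zero_mem' := by
    refine ⟨fun j => rfl, by simp⟩
  smul_mem' := by
    rintro c X ⟨hX, hX'⟩
    refine ⟨fun j => ?_, ?_⟩
    · simp [Matrix.smul_apply, hX j]
    · simp [Matrix.trace_smul, hX']
  lie_mem' := by
    rintro X Y ⟨hX, hX'⟩ ⟨hY, hY'⟩
    refine ⟨fun j => ?_, LieAlgebra.matrix_trace_commutator_zero _ _ _ _⟩
    have h : (⁅X, Y⁆ : Matrix (Fin (n + 2)) (Fin (n + 2)) ℂ) = X * Y - Y * X := rfl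
    rw [h]
    simp [Matrix.sub_apply, Matrix.mul_apply, hX, hY]

/-- Two Lie algebra homomorphisms `gCar n → sl(n+2, ℂ)` are equivalent up to an inner
automorphism of `sl(n+2, ℂ)` (conjugation). -/
def conjEquiv (n : ℕ)
    (f g : gCar n →ₗ⁅ℂ⁆ LieAlgebra.SpecialLinear.sl (Fin (n + 2)) ℂ) : Prop :=
  ∃ u : (Matrix (Fin (n + 2)) (Fin (n + 2)) ℂ)ˣ,
    ∀ x, ((g x : Matrix (Fin (n + 2)) (Fin (n + 2)) ℂ)) =
      (u : Matrix (Fin (n + 2)) (Fin (n + 2)) ℂ) *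
        (f x : Matrix (Fin (n + 2)) (Fin (n + 2)) ℂ) *
          ((u⁻¹ : _ˣ) : Matrix (Fin (n + 2)) (Fin (n + 2)) ℂ)

/-- `f = Φ`: the embedding sending `H_i, E_{p,q}, F_{p,q}, P_j` to
`H_{i+1}, E_{p+1,q+1}, F_{p+1,q+1}, F_{1,j}` respectively, i.e. the inclusion of the
concrete model `gCar n` into `sl(n+2, ℂ)`. -/
def IsPhi (n : ℕ) (f : gCar n →ₗ⁅ℂ⁆ LieAlgebra.SpecialLinear.sl (Fin (n + 2)) ℂ) : Prop :=
  ∀ x : gCar n, ((f x : Matrix (Fin (n + 2)) (Fin (n + 2)) ℂ)) =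
    (x : Matrix (Fin (n + 2)) (Fin (n + 2)) ℂ)

/-- `f = Θ`: the embedding sending `H_i ↦ -H_{i+1}`, `E_{p,q} ↦ -F_{p+1,q+1}`,
`F_{p,q} ↦ -E_{p+1,q+1}` and `P_j ↦ E_{1,j}`; entrywise, on the concrete model,
`Θ(X)_{1j} = X_{j1}`, `Θ(X)_{i1} = 0` and `Θ(X)_{ij} = -X_{ji}` for `i, j ≥ 2`. -/
def IsTheta (n : ℕ) (f : gCar n →ₗ⁅ℂ⁆ LieAlgebra.SpecialLinear.sl (Fin (n + 2)) ℂ) : Prop :=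
  ∀ x : gCar n, ∀ i j : Fin (n + 2),
    ((f x : Matrix (Fin (n + 2)) (Fin (n + 2)) ℂ)) i j =
      if i = 0 then (x : Matrix (Fin (n + 2)) (Fin (n + 2)) ℂ) j 0
      else if j = 0 then 0
      else -((x : Matrix (Fin (n + 2)) (Fin (n + 2)) ℂ)) j i

/-- `Ξ` acts on the Chevalley generators of `sl(n+2, ℂ)` by the order-reversing Dynkin
diagram automorphism `α_i ↦ α_{n+2-i}`. -/
def ChevCond (n : ℕ)
    (Ξ : LieAlgebra.SpecialLinear.sl (Fin (n + 2)) ℂ →ₗ⁅ℂ⁆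
      LieAlgebra.SpecialLinear.sl (Fin (n + 2)) ℂ) : Prop :=
  ∀ i : Fin (n + 1),
    (∀ x : LieAlgebra.SpecialLinear.sl (Fin (n + 2)) ℂ,
      (x : Matrix (Fin (n + 2)) (Fin (n + 2)) ℂ) =
          Matrix.single i.castSucc i.succ 1 →
      (Ξ x : Matrix (Fin (n + 2)) (Fin (n + 2)) ℂ) =
        Matrix.single i.rev.castSucc i.rev.succ 1) ∧
    (∀ x : LieAlgebra.SpecialLinear.sl (Fin (n + 2)) ℂ,
      (x : Matrix (Fin (n + 2)) (Fin (n + 2)) ℂ) =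
          Matrix.single i.succ i.castSucc 1 →
      (Ξ x : Matrix (Fin (n + 2)) (Fin (n + 2)) ℂ) =
        Matrix.single i.rev.succ i.rev.castSucc 1) ∧
    (∀ x : LieAlgebra.SpecialLinear.sl (Fin (n + 2)) ℂ,
      (x : Matrix (Fin (n + 2)) (Fin (n + 2)) ℂ) =
          Matrix.single i.castSucc i.castSucc 1
            - Matrix.single i.succ i.succ 1 →
      (Ξ x : Matrix (Fin (n + 2)) (Fin (n + 2)) ℂ) =
        Matrix.single i.rev.castSucc i.rev.castSucc 1
          - Matrix.single i.rev.succ i.rev.succ 1)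

end Paper


namespace Stmt6Aux

open Matrix

variable (n : ℕ)

noncomputable def τ (i : Fin (n+2)) : ℂ :=
  if i = Fin.last (n+1) then (-1)^n else (-1)^(i:ℕ)

lemma tau_sq (i : Fin (n+2)) : τ n i * τ n i = 1 := by
  unfold τ; split_ifs <;> (rw [← mul_pow]; norm_num)

noncomputable def Jm : Matrix (Fin (n+2)) (Fin (n+2)) ℂ :=
  Matrix.of fun i j => if j = i.rev then (-1)^(i:ℕ) else 0

noncomputable def Jinv : Matrix (Fin (n+2)) (Fin (n+2)) ℂ :=
  Matrix.of fun i j => if i = j.rev then (-1)^(j:ℕ) else 0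

noncomputable def Km : Matrix (Fin (n+2)) (Fin (n+2)) ℂ :=
  Matrix.of fun i j => if j = i.rev then τ n i else 0

noncomputable def Kinv : Matrix (Fin (n+2)) (Fin (n+2)) ℂ :=
  Matrix.of fun i j => if i = j.rev then τ n j else 0

lemma Jm_transpose : (Jm n)ᵀ = Jinv n := rfl
lemma Jinv_transpose : (Jinv n)ᵀ = Jm n := rfl

lemma Jm_mul (M : Matrix (Fin (n+2)) (Fin (n+2)) ℂ) (i j : Fin (n+2)) :
    (Jm n * M) i j = (-1)^(i:ℕ) * M i.rev j := by
  simp [Jm, Matrix.mul_apply, ite_mul, Finset.sum_ite_eq']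

lemma mul_Jinv (M : Matrix (Fin (n+2)) (Fin (n+2)) ℂ) (i j : Fin (n+2)) :
    (M * Jinv n) i j = M i j.rev * (-1)^(j:ℕ) := by
  simp [Jinv, Matrix.mul_apply, mul_ite, Finset.sum_ite_eq']

lemma Km_mul (M : Matrix (Fin (n+2)) (Fin (n+2)) ℂ) (i j : Fin (n+2)) :
    (Km n * M) i j = τ n i * M i.rev j := by
  simp [Km, Matrix.mul_apply, ite_mul, Finset.sum_ite_eq']

lemma mul_Kinv (M : Matrix (Fin (n+2)) (Fin (n+2)) ℂ) (i j : Fin (n+2)) :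
    (M * Kinv n) i j = M i j.rev * τ n j := by
  simp [Kinv, Matrix.mul_apply, mul_ite, Finset.sum_ite_eq']

lemma Jm_mul_Jinv : Jm n * Jinv n = 1 := by
  ext i j
  rw [Jm_mul]
  simp only [Jinv, Matrix.of_apply]
  by_cases h : i = j
  · subst h
    rw [if_pos rfl, Matrix.one_apply_eq, ← pow_add]
    exact Even.neg_one_pow ⟨(i:ℕ), rfl⟩
  · rw [if_neg (fun hc => h (Fin.rev_inj.mp hc)), mul_zero, Matrix.one_apply_ne h]

lemma Jinv_mul_Jm : Jinv n * Jm n = 1 :=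
  mul_eq_one_comm.mp (Jm_mul_Jinv n)

lemma Km_mul_Kinv : Km n * Kinv n = 1 := by
  ext i j
  rw [Km_mul]
  simp only [Kinv, Matrix.of_apply]
  by_cases h : i = j
  · subst h
    rw [if_pos rfl, Matrix.one_apply_eq, tau_sq]
  · rw [if_neg (fun hc => h (Fin.rev_inj.mp hc)), mul_zero, Matrix.one_apply_ne h]

lemma Kinv_mul_Km : Kinv n * Km n = 1 :=
  mul_eq_one_comm.mp (Km_mul_Kinv n)

noncomputable def thetaMat (X : Matrix (Fin (n+2)) (Fin (n+2)) ℂ) :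
    Matrix (Fin (n+2)) (Fin (n+2)) ℂ :=
  Matrix.of fun i j => if i = 0 then X j 0 else if j = 0 then 0 else -X j i

noncomputable def Sm : Matrix (Fin (n+2)) (Fin (n+2)) ℂ :=
  Matrix.diagonal fun i => if i = 0 then (-1 : ℂ) else 1

lemma Sm_sq : Sm n * Sm n = 1 := by
  ext i j
  rw [Sm, Matrix.diagonal_mul_diagonal]
  by_cases h : i = j
  · subst h
    rw [Matrix.diagonal_apply_eq, Matrix.one_apply_eq]
    split_ifs <;> norm_num
  · rw [Matrix.diagonal_apply_ne _ h, Matrix.one_apply_ne h]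

lemma thetaMat_eq {X : Matrix (Fin (n+2)) (Fin (n+2)) ℂ} (hX : ∀ j, X 0 j = 0) :
    thetaMat n X = -(Sm n * Xᵀ * Sm n) := by
  ext i j
  have h1 : (Sm n * Xᵀ * Sm n) i j
      = (if i = 0 then (-1:ℂ) else 1) * X j i * (if j = 0 then (-1:ℂ) else 1) := by
    rw [Sm, Matrix.mul_diagonal, Matrix.diagonal_mul, Matrix.transpose_apply]
  simp only [thetaMat, Matrix.of_apply, Matrix.neg_apply, h1]
  by_cases hi : i = 0
  · by_cases hj : j = 0
    · subst hi; subst hj; rw [hX 0]; simp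
    · subst hi; simp [hj]
  · by_cases hj : j = 0
    · subst hj; rw [hX i]; simp [hi]
    · simp [hi, hj]

lemma trace_thetaMat {X : Matrix (Fin (n+2)) (Fin (n+2)) ℂ} (hX : ∀ j, X 0 j = 0)
    (hX' : Matrix.trace X = 0) : Matrix.trace (thetaMat n X) = 0 := by
  rw [thetaMat_eq n hX, Matrix.trace_neg, Matrix.trace_mul_cycle, Sm_sq, Matrix.one_mul,
    Matrix.trace_transpose, hX', neg_zero]

lemma neg_conj_mul (S A B : Matrix (Fin (n+2)) (Fin (n+2)) ℂ) (hS : S * S = 1) :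
    (-(S * A * S)) * (-(S * B * S)) = S * (A * B) * S := by
  rw [neg_mul_neg]
  calc (S * A * S) * (S * B * S) = S * A * (S * S) * (B * S) := by
        simp only [Matrix.mul_assoc]
    _ = S * (A * B) * S := by rw [hS]; simp only [Matrix.mul_one, Matrix.mul_assoc]

lemma theta_bracket {X Y : Matrix (Fin (n+2)) (Fin (n+2)) ℂ}
    (hX : ∀ j, X 0 j = 0) (hY : ∀ j, Y 0 j = 0) :
    thetaMat n (X * Y - Y * X) = thetaMat n X * thetaMat n Y - thetaMat n Y * thetaMat n X := by
  have hrow : ∀ j, (X * Y - Y * X) 0 j = 0 := by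
    intro j
    simp [Matrix.sub_apply, Matrix.mul_apply, hX, hY]
  rw [thetaMat_eq n hrow, thetaMat_eq n hX, thetaMat_eq n hY,
    neg_conj_mul n _ _ _ (Sm_sq n), neg_conj_mul n _ _ _ (Sm_sq n)]
  rw [Matrix.transpose_sub, Matrix.transpose_mul, Matrix.transpose_mul]
  rw [Matrix.mul_sub, Matrix.sub_mul]
  abel

noncomputable def xiMat (X : Matrix (Fin (n+2)) (Fin (n+2)) ℂ) :
    Matrix (Fin (n+2)) (Fin (n+2)) ℂ :=
  -(Jm n * Xᵀ * Jinv n)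

lemma xiMat_apply (X : Matrix (Fin (n+2)) (Fin (n+2)) ℂ) (i j : Fin (n+2)) :
    xiMat n X i j = -((-1)^(i:ℕ) * (-1)^(j:ℕ) * X j.rev i.rev) := by
  rw [xiMat, Matrix.neg_apply, mul_Jinv, Jm_mul, Matrix.transpose_apply]
  ring

lemma trace_xiMat {X : Matrix (Fin (n+2)) (Fin (n+2)) ℂ} (hX : Matrix.trace X = 0) :
    Matrix.trace (xiMat n X) = 0 := by
  rw [xiMat, Matrix.trace_neg, Matrix.trace_mul_cycle, Jinv_mul_Jm, Matrix.one_mul,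
    Matrix.trace_transpose, hX, neg_zero]

lemma xi_bracket (X Y : Matrix (Fin (n+2)) (Fin (n+2)) ℂ) :
    xiMat n (X * Y - Y * X) = xiMat n X * xiMat n Y - xiMat n Y * xiMat n X := by
  unfold xiMat
  have key : ∀ A B : Matrix (Fin (n+2)) (Fin (n+2)) ℂ,
      (-(Jm n * A * Jinv n)) * (-(Jm n * B * Jinv n)) = Jm n * (A * B) * Jinv n := by
    intro A B
    rw [neg_mul_neg]
    calc (Jm n * A * Jinv n) * (Jm n * B * Jinv n)
        = Jm n * A * (Jinv n * Jm n) * (B * Jinv n) := by simp only [Matrix.mul_assoc]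
      _ = Jm n * (A * B) * Jinv n := by
          rw [Jinv_mul_Jm]; simp only [Matrix.mul_one, Matrix.mul_assoc]
  rw [key, key]
  rw [Matrix.transpose_sub, Matrix.transpose_mul, Matrix.transpose_mul]
  rw [Matrix.mul_sub, Matrix.sub_mul]
  abel

lemma Jm_mul_Jm : Jm n * Jm n = ((-1 : ℂ)^(n+1)) • 1 := by
  ext i j
  rw [Jm_mul]
  simp only [Jm, Matrix.of_apply, Fin.rev_rev, Matrix.smul_apply, Matrix.one_apply,
    smul_eq_mul]
  by_cases h : j = i
  · subst h
    rw [if_pos rfl, if_pos rfl, mul_one, ← pow_add]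
    congr 1
    rw [Fin.val_rev]
    omega
  · rw [if_neg h, if_neg (Ne.symm h), mul_zero, mul_zero]

lemma Jinv_mul_Jinv : Jinv n * Jinv n = ((-1 : ℂ)^(n+1)) • 1 := by
  have := congrArg Matrix.transpose (Jm_mul_Jm n)
  rwa [Matrix.transpose_mul, Jm_transpose, Matrix.transpose_smul, Matrix.transpose_one] at this

lemma xiMat_invol (X : Matrix (Fin (n+2)) (Fin (n+2)) ℂ) : xiMat n (xiMat n X) = X := by
  unfold xiMat
  rw [Matrix.transpose_neg, Matrix.mul_neg, Matrix.neg_mul, neg_neg,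
    Matrix.transpose_mul, Matrix.transpose_mul, Jinv_transpose,
    Matrix.transpose_transpose, Jm_transpose]
  simp only [Matrix.mul_assoc]
  rw [Jinv_mul_Jinv]
  simp only [Matrix.mul_smul, Matrix.mul_one]
  rw [← Matrix.mul_assoc, Jm_mul_Jm, Matrix.smul_mul, Matrix.one_mul, smul_smul,
    ← pow_add, Even.neg_one_pow ⟨n+1, rfl⟩, one_smul]

lemma xi_std (p q : Fin (n+2)) :
    xiMat n (Matrix.single p q 1)
      = Matrix.single q.rev p.rev (-((-1:ℂ)^(q.rev : ℕ) * (-1)^(p.rev : ℕ))) := by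
  ext a b
  rw [xiMat_apply]
  simp only [Matrix.single, Matrix.of_apply]
  by_cases h1 : a = q.rev
  · by_cases h2 : b = p.rev
    · subst h1; subst h2
      rw [if_pos ⟨(Fin.rev_rev p).symm, (Fin.rev_rev q).symm⟩, if_pos ⟨rfl, rfl⟩, mul_one]
    · rw [if_neg (fun hc => h2 (by rw [hc.1, Fin.rev_rev])), if_neg (fun hc => h2 hc.2.symm)]
      ring
  · rw [if_neg (fun hc => h1 (by rw [hc.2, Fin.rev_rev])), if_neg (fun hc => h1 hc.1.symm)]
    ring

lemma rev_eq_zero_iff (i : Fin (n+2)) : i.rev = 0 ↔ i = Fin.last (n+1) := by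
  rw [Fin.rev_eq_iff]; simp [Fin.rev_zero]

lemma main_conj {X : Matrix (Fin (n+2)) (Fin (n+2)) ℂ} (hX : ∀ j, X 0 j = 0) :
    xiMat n (thetaMat n X) = Km n * X * Kinv n := by
  ext i j
  rw [xiMat_apply, mul_Kinv, Km_mul]
  simp only [thetaMat, Matrix.of_apply]
  by_cases hj : j = Fin.last (n+1)
  · have hj0 : j.rev = 0 := (rev_eq_zero_iff n j).mpr hj
    rw [if_pos hj0]
    by_cases hi : i = Fin.last (n+1)
    · have hi0 : i.rev = 0 := (rev_eq_zero_iff n i).mpr hi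
      rw [hi0, hX 0, hX j.rev]
      ring
    · have hτi : τ n i = (-1)^(i:ℕ) := by rw [τ, if_neg hi]
      have hτj : τ n j = (-1)^n := by rw [τ, if_pos hj]
      have hjval : (j : ℕ) = n + 1 := by rw [hj]; rfl
      rw [hτi, hτj, hj0, hjval, pow_succ]
      ring
  · have hj0 : ¬ (j.rev = 0) := fun hc => hj ((rev_eq_zero_iff n j).mp hc)
    rw [if_neg hj0]
    by_cases hi : i = Fin.last (n+1)
    · have hi0 : i.rev = 0 := (rev_eq_zero_iff n i).mpr hi
      rw [if_pos hi0, hi0, hX j.rev]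
      ring
    · have hi0 : ¬ (i.rev = 0) := fun hc => hi ((rev_eq_zero_iff n i).mp hc)
      rw [if_neg hi0]
      have hτi : τ n i = (-1)^(i:ℕ) := by rw [τ, if_neg hi]
      have hτj : τ n j = (-1)^(j:ℕ) := by rw [τ, if_neg hj]
      rw [hτi, hτj]
      ring

end Stmt6Aux

section Final

open Stmt6Aux Paper

variable (n : ℕ)

lemma sign_aux (k : ℕ) : -((-1:ℂ)^k * (-1)^(k+1)) = 1 := by
  have h : ((-1:ℂ))^(k+k) = 1 := Even.neg_one_pow ⟨k, rfl⟩
  calc -((-1:ℂ)^k * (-1)^(k+1)) = (-1)^k * (-1)^k := by rw [pow_succ]; ring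
    _ = (-1)^(k+k) := (pow_add _ _ _).symm
    _ = 1 := h

lemma sign_aux2 (k : ℕ) : -((-1:ℂ)^k * (-1)^k) = -1 := by
  rw [← pow_add, Even.neg_one_pow ⟨k, rfl⟩]

lemma xi_std' (p q : Fin (n+2)) (c : ℂ)
    (hc : -((-1:ℂ)^(q.rev : ℕ) * (-1)^(p.rev : ℕ)) = c) :
    xiMat n (Matrix.single p q 1) = Matrix.single q.rev p.rev c := by
  rw [xi_std, hc]

lemma std_neg (a b : Fin (n+2)) :
    Matrix.single a b (-1:ℂ) = -Matrix.single a b 1 := by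
  ext i j
  simp only [Matrix.single, Matrix.of_apply, Matrix.neg_apply]
  split_ifs <;> simp

lemma xiMat_sub (A B : Matrix (Fin (n+2)) (Fin (n+2)) ℂ) :
    xiMat n (A - B) = xiMat n A - xiMat n B := by
  unfold xiMat
  rw [Matrix.transpose_sub, Matrix.mul_sub, Matrix.sub_mul]
  abel

noncomputable def PhiHom : gCar n →ₗ⁅ℂ⁆ LieAlgebra.SpecialLinear.sl (Fin (n + 2)) ℂ where
  toFun x := ⟨x.1, x.2.2⟩
  map_add' x y := rfl
  map_smul' c x := rfl
  map_lie' := rfl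

noncomputable def ThetaHom : gCar n →ₗ⁅ℂ⁆ LieAlgebra.SpecialLinear.sl (Fin (n + 2)) ℂ where
  toFun x := ⟨thetaMat n x.1, trace_thetaMat n x.2.1 x.2.2⟩
  map_add' x y := by
    apply Subtype.ext
    show thetaMat n (x.1 + y.1) = thetaMat n x.1 + thetaMat n y.1
    ext i j
    simp only [thetaMat, Matrix.of_apply, Matrix.add_apply]
    split_ifs <;> ring
  map_smul' c x := by
    apply Subtype.ext
    show thetaMat n (c • x.1) = c • thetaMat n x.1
    ext i j
    simp only [thetaMat, Matrix.of_apply, Matrix.smul_apply, smul_eq_mul]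
    split_ifs <;> ring
  map_lie' {x y} := by
    apply Subtype.ext
    show thetaMat n (x.1 * y.1 - y.1 * x.1) = _
    rw [theta_bracket n x.2.1 y.2.1]
    rfl

noncomputable def XiHom : LieAlgebra.SpecialLinear.sl (Fin (n + 2)) ℂ →ₗ⁅ℂ⁆
    LieAlgebra.SpecialLinear.sl (Fin (n + 2)) ℂ where
  toFun x := ⟨xiMat n x.1, trace_xiMat n x.2⟩
  map_add' x y := by
    apply Subtype.ext
    show xiMat n (x.1 + y.1) = xiMat n x.1 + xiMat n y.1
    unfold xiMat
    rw [Matrix.transpose_add, Matrix.mul_add, Matrix.add_mul]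
    abel
  map_smul' c x := by
    apply Subtype.ext
    show xiMat n (c • x.1) = c • xiMat n x.1
    unfold xiMat
    rw [Matrix.transpose_smul, Matrix.mul_smul, Matrix.smul_mul, smul_neg]
  map_lie' {x y} := by
    apply Subtype.ext
    show xiMat n (x.1 * y.1 - y.1 * x.1) = _
    rw [xi_bracket n x.1 y.1]
    rfl

theorem stmt_6' (n : ℕ) :
    ∃ (Φ Θ : gCar n →ₗ⁅ℂ⁆ LieAlgebra.SpecialLinear.sl (Fin (n + 2)) ℂ)
      (Ξ : LieAlgebra.SpecialLinear.sl (Fin (n + 2)) ℂ →ₗ⁅ℂ⁆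
        LieAlgebra.SpecialLinear.sl (Fin (n + 2)) ℂ),
      Function.Injective Φ ∧ Function.Injective Θ ∧ Function.Bijective Ξ ∧
      IsPhi n Φ ∧ IsTheta n Θ ∧ ChevCond n Ξ ∧
      conjEquiv n (Ξ.comp Θ) Φ := by
  refine ⟨PhiHom n, ThetaHom n, XiHom n, ?_, ?_, ?_, ?_, ?_, ?_, ?_⟩
  · -- Φ injective
    intro a b h
    have h' : (PhiHom n a).1 = (PhiHom n b).1 := congrArg Subtype.val h
    exact Subtype.ext h'
  · -- Θ injective
    intro a b h
    have h' : thetaMat n a.1 = thetaMat n b.1 := congrArg Subtype.val h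
    apply Subtype.ext
    ext i j
    by_cases hi : i = 0
    · subst hi; rw [a.2.1 j, b.2.1 j]
    · by_cases hj : j = 0
      · subst hj
        have := congrFun (congrFun h' 0) i
        simpa only [thetaMat, Matrix.of_apply, if_pos rfl, if_true] using this
      · have := congrFun (congrFun h' j) i
        simp only [thetaMat, Matrix.of_apply, if_neg hj, if_neg hi] at this
        exact neg_inj.mp this
  · -- Ξ bijective
    exact Function.Involutive.bijective fun x => Subtype.ext (xiMat_invol n x.1)
  · -- IsPhi
    intro x; rfl
  · -- IsTheta
    intro x i j; rfl
  · -- ChevCond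
    intro i
    refine ⟨?_, ?_, ?_⟩
    · intro x hx
      show xiMat n x.1 = _
      rw [hx, xi_std' n _ _ 1 ?_, Fin.rev_succ, Fin.rev_castSucc]
      rw [Fin.rev_succ, Fin.rev_castSucc, Fin.coe_castSucc, Fin.val_succ]
      exact sign_aux _
    · intro x hx
      show xiMat n x.1 = _
      rw [hx, xi_std' n _ _ 1 ?_, Fin.rev_succ, Fin.rev_castSucc]
      rw [Fin.rev_succ, Fin.rev_castSucc, Fin.coe_castSucc, Fin.val_succ]
      rw [mul_comm]
      exact sign_aux _
    · intro x hx
      show xiMat n x.1 = _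
      rw [hx, xiMat_sub, xi_std' n _ _ (-1) ?_, xi_std' n _ _ (-1) ?_]
      · rw [Fin.rev_succ, Fin.rev_castSucc, std_neg, std_neg]
        abel
      · exact sign_aux2 _
      · exact sign_aux2 _
  · -- conjEquiv
    refine ⟨⟨Kinv n, Km n, Kinv_mul_Km n, Km_mul_Kinv n⟩, fun x => ?_⟩
    show (x.1 : Matrix (Fin (n+2)) (Fin (n+2)) ℂ)
      = Kinv n * xiMat n (thetaMat n x.1) * Km n
    rw [main_conj n x.2.1]
    simp only [← Matrix.mul_assoc]
    rw [Kinv_mul_Km, Matrix.one_mul, Matrix.mul_assoc, Kinv_mul_Km, Matrix.mul_one]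

end Final

open Paper in
/-- Proposition 2.8: if `Ξ` is the automorphism of `sl(n+2, ℂ)` induced by
the order-reversing Dynkin diagram automorphism, then the embedding `Ξ ∘ Θ` of
`sl(n+1) ⋉ ℂ^{n+1}` into `sl(n+2, ℂ)` is equivalent (conjugate by an inner automorphism)
to the embedding `Φ`. -/
theorem stmt_6 (n : ℕ) :
    ∃ (Φ Θ : gCar n →ₗ⁅ℂ⁆ LieAlgebra.SpecialLinear.sl (Fin (n + 2)) ℂ)
      (Ξ : LieAlgebra.SpecialLinear.sl (Fin (n + 2)) ℂ →ₗ⁅ℂ⁆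
        LieAlgebra.SpecialLinear.sl (Fin (n + 2)) ℂ),
      Function.Injective Φ ∧ Function.Injective Θ ∧ Function.Bijective Ξ ∧
      IsPhi n Φ ∧ IsTheta n Θ ∧ ChevCond n Ξ ∧
      conjEquiv n (Ξ.comp Θ) Φ := by
  exact stmt_6' n
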